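/- Let H be a free ℤ-module of rank 2k with a unimodular symmetric type II bilinear form Λ admitting a hyperbolic basis λ₁,…,λ_k,μ₁,…,μ_k (Λ(λ_i,λ_j)=0, Λ(μ_i,μ_j)=0, Λ(λ_i,μ_j)=δ_{ij}), and sν : H → ℤ/2 a homomorphism. If H admits a Lagrangian L with sν|_L ≡ 0, then the Arf invariant Σ_{i=1}^k sν(λ_i)·sν(μ_i) vanishes in ℤ/2. -/

import Mathlib

-- divide an even-valued functional by 2
lemma half_functional {M : Type*} [AddCommGroup M] [Module ℤ M] (f : M →ₗ[ℤ] ℤ)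
    (h : ∀ x, 2 ∣ f x) : ∃ g : M →ₗ[ℤ] ℤ, ∀ x, f x = 2 * g x := by
  refine ⟨{ toFun := fun x => f x / 2, map_add' := ?_, map_smul' := ?_ }, ?_⟩
  · intro x y
    obtain ⟨a, ha⟩ := h x; obtain ⟨b, hb⟩ := h y
    simp only [map_add, ha, hb]; omega
  · intro r x
    obtain ⟨a, ha⟩ := h x
    simp only [map_smul, ha, smul_eq_mul, eq_intCast, Int.cast_id]
    rw [Int.mul_ediv_assoc r (by omega : (2:ℤ) ∣ 2 * a)]
  · intro x
    obtain ⟨a, ha⟩ := h x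
    simp only [ha, LinearMap.coe_mk, AddHom.coe_mk]; omega

section
variable {H : Type*} [AddCommGroup H] [Module ℤ H]
    [Module.Free ℤ H] [Module.Finite ℤ H]
    (Λ : H →ₗ[ℤ] H →ₗ[ℤ] ℤ)

-- any functional on a direct summand is represented by Λ(·, d)
lemma represent (hsymm : ∀ x y, Λ x y = Λ y x)
    (hsurj : Function.Surjective fun x : H => Λ x)
    {L L' : Submodule ℤ H} (hc : IsCompl L L') (g : L →ₗ[ℤ] ℤ) :
    ∃ d : H, ∀ ℓ : L, Λ (ℓ : H) d = g ℓ := by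
  obtain ⟨d, hd⟩ := hsurj { toFun := fun x => g (L.projectionOnto L' hc x), map_add' := (by simp), map_smul' := (by
    intro r x
    have h1 := @LinearMap.map_smul' ℤ ℤ _ _ (RingHom.id ℤ) H L _ _ _ L.module (L.projectionOnto L' hc) r x
    simp only [RingHom.id_apply, AddHom.toFun_eq_coe, LinearMap.coe_toAddHom] at h1
    have h2 := map_zsmul g.toAddMonoidHom r (L.projectionOnto L' hc x)
    convert h2 using 2
    · refine congrArg g (h1.trans (Subtype.ext ?_))
      exact Int.cast_smul_eq_zsmul ℤ r _
    · rfl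
    · rfl) }
  refine ⟨d, fun ℓ => ?_⟩
  have hd' := LinearMap.congr_fun hd (ℓ : H)
  rw [hsymm _ d]
  simpa [Submodule.projectionOnto_apply_left] using hd'
end


lemma int_module_eq {M : Type*} [AddCommGroup M] (i j : Module ℤ M) : i = j :=
  @Subsingleton.elim _ AddCommGroup.uniqueIntModule.instSubsingleton i j

lemma submodule_nzsd {H : Type*} [AddCommGroup H] [Module ℤ H] [Module.Free ℤ H]
    (p : Submodule ℤ H) : NoZeroSMulDivisors ℤ ↥p := by
  haveI hH : @NoZeroSMulDivisors ℤ H _ _ (SMulZeroClass.toSMul) :=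
    @NoZeroSMulDivisors.mk ℤ H _ _ SMulZeroClass.toSMul (fun h => smul_eq_zero.mp h)
  constructor
  intro c x hcx
  rcases eq_or_ne c 0 with h | h
  · exact Or.inl h
  · refine Or.inr ?_
    have hcoe : ((c • x : p) : H) = c • (x : H) :=
      map_zsmul (AddMonoidHom.mk' (fun y : p => (y : H)) (fun _ _ => rfl)) c x
    have hH0 : c • (x : H) = 0 := by rw [← hcoe, hcx]; rfl
    rw [← Int.cast_smul_eq_zsmul ℤ c (x : H), Int.cast_id] at hH0
    rcases hH.eq_zero_or_eq_zero_of_smul_eq_zero hH0 with h' | h'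
    · exact absurd h' h
    · exact Subtype.ext h'

lemma perp_le {H : Type*} [AddCommGroup H] [Module ℤ H]
    [Module.Free ℤ H] [Module.Finite ℤ H]
    (Λ : H →ₗ[ℤ] H →ₗ[ℤ] ℤ)
    (hsymm : ∀ x y, Λ x y = Λ y x)
    (hbij : Function.Bijective fun x : H => Λ x)
    {L L' : Submodule ℤ H} (hc : IsCompl L L')
    (hiso : ∀ x ∈ L, ∀ y ∈ L, Λ x y = 0)
    (hrank : 2 * Module.finrank ℤ L = Module.finrank ℤ H)
    {e : H} (he : ∀ ℓ ∈ L, Λ ℓ e = 0) : e ∈ L := by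
  classical
  haveI : IsNoetherian ℤ H := isNoetherian_of_isNoetherianRing_of_finite ℤ H
  haveI : Module.Finite ℤ L := by
    rw [int_module_eq (AddCommGroup.toIntModule ↥L) L.module]
    exact Module.Finite.iff_fg.mpr (IsNoetherian.noetherian L)
  haveI : NoZeroSMulDivisors ℤ ↥L := submodule_nzsd L
  haveI : Module.Free ℤ L := Module.free_of_finite_type_torsion_free'
  set k := Module.finrank ℤ L with hk
  let bL : Module.Basis (Fin k) ℤ L := Module.finBasis ℤ L
  let f : H →ₗ[ℤ] (Fin k → ℤ) := LinearMap.pi fun i => Λ (bL i : H)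
  have hfsurj : Function.Surjective f := by
    intro v
    obtain ⟨d, hd⟩ := represent Λ hsymm hbij.2 hc (bL.constr ℤ v)
    exact ⟨d, funext fun i => by simp [f, LinearMap.pi_apply, hd (bL i), Module.Basis.constr_basis]⟩
  have hLker : L ≤ LinearMap.ker f := by
    intro ℓ hℓ
    simp only [LinearMap.mem_ker, f, LinearMap.pi_apply]
    exact funext fun i => hiso _ (bL i).2 _ hℓ
  have heker : e ∈ LinearMap.ker f := by
    simp only [LinearMap.mem_ker, f, LinearMap.pi_apply]
    exact funext fun i => he _ (bL i).2
  -- rank computation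
  have hrk : Module.rank ℤ (LinearMap.ker f) = k := by
    rw [int_module_eq (AddCommGroup.toIntModule ↥(LinearMap.ker f)) (LinearMap.ker f).module]
    have h1 := LinearMap.lift_rank_eq_of_surjective hfsurj
    rw [← Module.finrank_eq_rank ℤ H, ← hrank] at h1
    rw [show Module.rank ℤ (Fin k → ℤ) = ((k : ℕ) : Cardinal) from by simp] at h1
    simp only [Cardinal.lift_natCast] at h1
    rw [show ((2 * k : ℕ) : Cardinal) = ((k : ℕ) : Cardinal) + ((k : ℕ) : Cardinal) from by
      push_cast; ring] at h1
    have h6 := Cardinal.eq_of_add_eq_add_left h1 (Cardinal.nat_lt_aleph0 k)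
    exact Cardinal.lift_eq_nat_iff.mp h6.symm
  -- decompose e
  obtain ⟨p, hp, q, hq, rfl⟩ : ∃ p ∈ L, ∃ q ∈ L', e = p + q := by
    have : (e : H) ∈ L ⊔ L' := by rw [hc.sup_eq_top]; trivial
    obtain ⟨p, hp, q, hq, h⟩ := Submodule.mem_sup.mp this
    exact ⟨p, hp, q, hq, h.symm⟩
  have hqker : q ∈ LinearMap.ker f := by
    have hpk := hLker hp
    simpa using (LinearMap.ker f).sub_mem heker hpk
  by_cases hq0 : q = 0
  · simpa [hq0] using hp
  exfalso
  set W : Submodule ℤ H := Submodule.span ℤ {q} with hW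
  have hWL' : W ≤ L' := Submodule.span_le.mpr (by simpa using hq)
  have hWker : W ≤ LinearMap.ker f := Submodule.span_le.mpr (by simpa using hqker)
  let ψ : (L × W) →ₗ[ℤ] (LinearMap.ker f) :=
    (AddMonoidHom.mk' (fun x : L × W =>
        (⟨(x.1 : H) + (x.2 : H), (LinearMap.ker f).add_mem (hLker x.1.2) (hWker x.2.2)⟩ :
          LinearMap.ker f))
      (fun a b => Subtype.ext (by
        show ((a.1 : H) + (b.1 : H)) + ((a.2 : H) + (b.2 : H)) = _
        show _ = ((a.1 : H) + (a.2 : H)) + ((b.1 : H) + (b.2 : H))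
        abel))).toIntLinearMap
  have hψinj : Function.Injective ψ := by
    intro x y hxy
    have hxy' : (x.1 : H) + (x.2 : H) = (y.1 : H) + (y.2 : H) := congrArg Subtype.val hxy
    have hsub : (x.1 : H) - (y.1 : H) = (y.2 : H) - (x.2 : H) := by
      rw [sub_eq_sub_iff_add_eq_add, hxy']; exact add_comm _ _
    have hmem : (x.1 : H) - (y.1 : H) ∈ L ⊓ L' := by
      constructor
      · exact L.sub_mem x.1.2 y.1.2
      · rw [hsub]; exact L'.sub_mem (hWL' y.2.2) (hWL' x.2.2)
    rw [hc.inf_eq_bot] at hmem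
    have h1 : (x.1 : H) = (y.1 : H) := sub_eq_zero.mp hmem
    have h2 : (x.2 : H) = (y.2 : H) := by rwa [h1, add_right_inj] at hxy'
    exact Prod.ext (Subtype.ext h1) (Subtype.ext h2)
  have hle : Module.rank ℤ (L × W) ≤ Module.rank ℤ (LinearMap.ker f) :=
    LinearMap.rank_le_of_injective ψ hψinj
  have hW1 : 1 ≤ Module.rank ℤ W := by
    haveI hH : @NoZeroSMulDivisors ℤ H _ _ (SMulZeroClass.toSMul) :=
    @NoZeroSMulDivisors.mk ℤ H _ _ SMulZeroClass.toSMul (fun h => smul_eq_zero.mp h)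
    let g : ℤ →ₗ[ℤ] W :=
      (AddMonoidHom.mk' (fun n : ℤ => (⟨n • q, W.toAddSubgroup.zsmul_mem
          (Submodule.mem_span_singleton_self q) n⟩ : W))
        (fun n m => Subtype.ext (by show (n + m) • q = n • q + m • q; exact add_zsmul q n m))
        ).toIntLinearMap
    have hg : Function.Injective g := by
      intro n m hnm
      have h1 : n • q = m • q := congrArg Subtype.val hnm
      have h2 : (n - m) • q = 0 := by rw [sub_zsmul, h1]; abel
      rw [← Int.cast_smul_eq_zsmul ℤ (n - m) q, Int.cast_id] at h2
      rcases hH.eq_zero_or_eq_zero_of_smul_eq_zero h2 with h' | h'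
      · omega
      · exact absurd h' hq0
    have h3 := LinearMap.lift_rank_le_of_injective g hg
    rw [Module.rank_self, Cardinal.lift_one] at h3
    exact (Cardinal.one_le_lift_iff).mp h3
  haveI : Module.Finite ℤ W := by
    rw [int_module_eq (AddCommGroup.toIntModule ↥W) W.module]
    exact Module.Finite.iff_fg.mpr (IsNoetherian.noetherian W)
  haveI : NoZeroSMulDivisors ℤ ↥W := submodule_nzsd W
  haveI : Module.Free ℤ W := Module.free_of_finite_type_torsion_free'
  have hprod : Module.rank ℤ (L × W) = Module.rank ℤ L + Module.rank ℤ W := rank_prod'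
  rw [hprod, hrk, ← Module.finrank_eq_rank ℤ L, ← hk] at hle
  have h7 : (k : Cardinal) + 1 ≤ (k : Cardinal) + Module.rank ℤ W := add_le_add_right hW1 _
  have hcontra : (k : Cardinal) + 1 ≤ (k : Cardinal) := le_trans h7 hle
  have h8 : ((k + 1 : ℕ) : Cardinal) ≤ ((k : ℕ) : Cardinal) := by push_cast; exact hcontra
  exact absurd (Nat.cast_le.mp h8) (by omega)

/-- `L` is a Lagrangian for the bilinear form `Λ`: a direct summand on which `Λ`
vanishes identically and whose rank is half the rank of the ambient module. -/
def IsLagrangian {H : Type*} [AddCommGroup H] [Module ℤ H]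
    (Λ : H →ₗ[ℤ] H →ₗ[ℤ] ℤ) (L : Submodule ℤ H) : Prop :=
  (∃ L' : Submodule ℤ H, IsCompl L L') ∧ (∀ x ∈ L, ∀ y ∈ L, Λ x y = 0) ∧
    2 * Module.finrank ℤ L = Module.finrank ℤ H

theorem stmt2 {H : Type*} [AddCommGroup H] [Module ℤ H]
    [Module.Free ℤ H] [Module.Finite ℤ H]
    (k : ℕ) (b : Module.Basis (Fin k ⊕ Fin k) ℤ H)
    (Λ : H →ₗ[ℤ] H →ₗ[ℤ] ℤ)
    (hsymm : ∀ x y, Λ x y = Λ y x)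
    (hunimod : Function.Bijective fun x : H => Λ x)
    (heven : ∀ x, Even (Λ x x))
    (hll : ∀ i j, Λ (b (Sum.inl i)) (b (Sum.inl j)) = 0)
    (hmm : ∀ i j, Λ (b (Sum.inr i)) (b (Sum.inr j)) = 0)
    (hlm : ∀ i j, Λ (b (Sum.inl i)) (b (Sum.inr j)) = if i = j then 1 else 0)
    (sν : H →+ ZMod 2)
    (L : Submodule ℤ H) (hL : IsLagrangian Λ L) (hLν : ∀ x ∈ L, sν x = 0) :
    ∑ i : Fin k, sν (b (Sum.inl i)) * sν (b (Sum.inr i)) = 0 := by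
  classical
  obtain ⟨⟨L', hcompl⟩, hiso, hrank⟩ := hL
  -- Step 1: represent sν by an element c via the unimodular form
  set φ : H →ₗ[ℤ] ℤ := b.constr ℤ (fun i => ((sν (b i)).val : ℤ)) with hφ
  obtain ⟨c, hc⟩ := hunimod.2 φ
  have hc' : Λ c = φ := hc
  have hbase : ∀ j, sν (b j) = ((Λ c (b j) : ℤ) : ZMod 2) := by
    intro j
    rw [hc', hφ, Module.Basis.constr_basis]
    push_cast
    rw [ZMod.natCast_val, ZMod.cast_id]
  have hsν : ∀ y : H, sν y = ((Λ c y : ℤ) : ZMod 2) := by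
    intro y
    conv_lhs => rw [← b.sum_repr y]
    conv_rhs => rw [← b.sum_repr y]
    rw [map_sum, map_sum, Int.cast_sum]
    apply Finset.sum_congr rfl
    intro j _
    have h1 := map_intCast_smul sν ℤ (ZMod 2) (b.repr y j) (b j)
    rw [Int.cast_id] at h1
    rw [h1, hbase j, LinearMap.map_smul (Λ c), smul_eq_mul, smul_eq_mul]
    push_cast
    ring
  -- Step 2: Λ ℓ c is even on L
  let T : L →ₗ[ℤ] ℤ := ((Λ c).toAddMonoidHom.comp
      (AddMonoidHom.mk' (fun y : L => (y : H)) (fun _ _ => rfl))).toIntLinearMap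
  have hLeven : ∀ x : L, 2 ∣ T x := by
    intro x
    have h0 := hLν x x.2
    rw [hsν x] at h0
    have := (ZMod.intCast_zmod_eq_zero_iff_dvd (Λ c x) 2).mp h0
    exact this
  obtain ⟨g, hg⟩ := half_functional T hLeven
  obtain ⟨d, hd⟩ := represent Λ hsymm hunimod.2 hcompl g
  -- Step 3: e := c - 2d is orthogonal to L, hence in L
  have he : ∀ ℓ ∈ L, Λ ℓ (c - (2:ℤ) • d) = 0 := by
    intro ℓ hℓ
    have h1 : Λ ℓ c = 2 * g ⟨ℓ, hℓ⟩ := by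
      rw [hsymm ℓ c]
      exact hg ⟨ℓ, hℓ⟩
    have h2 : Λ ℓ d = g ⟨ℓ, hℓ⟩ := hd ⟨ℓ, hℓ⟩
    simp [map_sub, map_smul, h1, h2]
  have hmem : c - (2:ℤ) • d ∈ L := perp_le Λ hsymm hunimod hcompl hiso hrank he
  set ℓ0 := c - (2:ℤ) • d with hℓ0
  have hceq : c = ℓ0 + (2:ℤ) • d := by rw [hℓ0]; abel
  -- Step 4: Λ c c is divisible by 4
  have h4 : Λ c c = 4 * (Λ ℓ0 d + Λ d d) := by
    have e1 : Λ ℓ0 ℓ0 = 0 := hiso _ hmem _ hmem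
    have e2 : Λ d ℓ0 = Λ ℓ0 d := hsymm d ℓ0
    calc Λ c c = Λ (ℓ0 + (2:ℤ) • d) (ℓ0 + (2:ℤ) • d) := by rw [← hceq]
    _ = Λ ℓ0 ℓ0 + 2 * Λ ℓ0 d + (2 * Λ d ℓ0 + 4 * Λ d d) := by
        simp [map_add, map_smul, smul_eq_mul]; ring
    _ = 4 * (Λ ℓ0 d + Λ d d) := by rw [e1, e2]; ring
  -- Step 5: coordinates of c
  have hinl : ∀ i, Λ c (b (Sum.inl i)) = b.repr c (Sum.inr i) := by
    intro i
    rw [hsymm]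
    conv_lhs => rw [← b.sum_repr c]
    rw [map_sum]
    simp only [map_smul, smul_eq_mul]
    rw [Fintype.sum_sum_type]
    simp only [hll, hlm, mul_zero, mul_ite, mul_one, Finset.sum_const_zero, zero_add]
    simp [Finset.sum_ite_eq']
  have hinr : ∀ i, Λ c (b (Sum.inr i)) = b.repr c (Sum.inl i) := by
    intro i
    rw [hsymm]
    conv_lhs => rw [← b.sum_repr c]
    rw [map_sum]
    simp only [map_smul, smul_eq_mul]
    rw [Fintype.sum_sum_type]
    have hlm' : ∀ j, Λ (b (Sum.inr i)) (b (Sum.inl j)) = if j = i then 1 else 0 := by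
      intro j; rw [hsymm]; exact hlm j i
    simp only [hmm, hlm', mul_zero, mul_ite, mul_one, Finset.sum_const_zero, add_zero]
    simp [Finset.sum_ite_eq']
  -- Step 6: Λ c c = 2 * S
  set S : ℤ := ∑ i : Fin k, b.repr c (Sum.inl i) * b.repr c (Sum.inr i) with hS
  have h2S : Λ c c = 2 * S := by
    nth_rewrite 2 [← b.sum_repr c]
    rw [map_sum]
    simp only [map_smul, smul_eq_mul]
    rw [Fintype.sum_sum_type]
    simp only [hinl, hinr]
    rw [hS, Finset.mul_sum, ← Finset.sum_add_distrib]
    apply Finset.sum_congr rfl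
    intro i _
    ring
  -- Step 7: conclude
  have hS2 : ∃ m : ℤ, S = 2 * m := ⟨Λ ℓ0 d + Λ d d, by omega⟩
  obtain ⟨m, hm⟩ := hS2
  have hterm : ∀ i, sν (b (Sum.inl i)) * sν (b (Sum.inr i)) =
      ((b.repr c (Sum.inl i) * b.repr c (Sum.inr i) : ℤ) : ZMod 2) := by
    intro i
    rw [hsν (b (Sum.inl i)), hsν (b (Sum.inr i)), hinl, hinr]
    push_cast
    ring
  calc ∑ i : Fin k, sν (b (Sum.inl i)) * sν (b (Sum.inr i))
      = ((S : ℤ) : ZMod 2) := by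
        rw [hS]; push_cast
        exact Finset.sum_congr rfl fun i _ => by rw [hterm i]; push_cast; ring
    _ = 0 := by
        rw [hm]; push_cast
        rw [show ((2 : ZMod 2)) = 0 from by decide, zero_mul]
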